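/- (Birman–Schwinger principle for embedded eigenvalues.) Let m ≥ 0, let V ∈ ℓ¹(ℤ, ℂ^{2×2}), and let λ ∈ σ(D₀) \ {±m, ±√(m²+4)} be such that D_V ψ = λ ψ for some ψ ∈ H. Then φ := √W ψ ∈ H, and for every φ' ∈ H one has lim_{ε → 0⁺} ⟨φ', K(λ + iε) φ⟩_H = −⟨φ', φ⟩_H. -/

import Mathlib

open scoped ComplexOrder
open Matrix

noncomputable section

abbrev Mat2 : Type := Matrix (Fin 2) (Fin 2) ℂ
abbrev Vec2 : Type := EuclideanSpace ℂ (Fin 2)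
abbrev Hsp : Type := lp (fun _ : ℤ => Vec2) 2

/-- A `2×2` complex matrix acting on `ℂ²` as a continuous linear map. -/
def mAct (A : Mat2) : Vec2 →L[ℂ] Vec2 := Matrix.toEuclideanCLM (𝕜 := ℂ) A

/-- The spectral (operator) norm of a `2×2` complex matrix. -/
def specNorm (A : Mat2) : ℝ := ‖mAct A‖

/-- The Hilbert–Schmidt (Frobenius) norm of a `2×2` complex matrix. -/
def hsNorm (A : Mat2) : ℝ := Real.sqrt (∑ i, ∑ j, ‖A i j‖ ^ 2)

def bMat (m : ℝ) : Mat2 := !![(-m : ℂ), 1; 1, (m : ℂ)]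

def aMat : Mat2 := !![0, 0; -1, 0]

/-- `D0` is the free discrete Dirac operator with mass `m`. -/
def IsFreeDirac (m : ℝ) (D0 : Hsp →L[ℂ] Hsp) : Prop :=
  ∀ u : Hsp, ∀ n : ℤ,
    (D0 u) n = mAct aMat.transpose (u (n - 1)) + mAct (bMat m) (u n) + mAct aMat (u (n + 1))

/-- `Vop` is the block-diagonal operator with blocks `υ n`. -/
def IsBlockDiagOp (υ : ℤ → Mat2) (Vop : Hsp →L[ℂ] Hsp) : Prop :=
  ∀ u : Hsp, ∀ n : ℤ, (Vop u) n = mAct (υ n) (u n)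

/-- The spectrum `[−√(m²+4), −m] ∪ [m, √(m²+4)]` as a subset of `ℂ`. -/
def sigma0 (m : ℝ) : Set ℂ :=
  Complex.ofReal '' (Set.Icc (-Real.sqrt (m ^ 2 + 4)) (-m) ∪ Set.Icc m (Real.sqrt (m ^ 2 + 4)))

def T0mat (m : ℝ) (lam k : ℂ) : Mat2 :=
  (k⁻¹ - k)⁻¹ • !![lam - m, 1 - k; 1 - k, lam + m]

def T1mat (m : ℝ) (lam k : ℂ) : Mat2 :=
  (k * (k⁻¹ - k)⁻¹) • !![lam - m, 1 - k; 1 - k⁻¹, lam + m]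

def Tmat (m : ℝ) (lam k : ℂ) : ℤ → Mat2 := fun j =>
  if j = 0 then T0mat m lam k
  else if 0 < j then k ^ (j.toNat - 1) • T1mat m lam k
  else (k ^ ((-j).toNat - 1) • T1mat m lam k).transpose

def psdSqrt {A : Mat2} (hA : A.PosSemidef) : Mat2 :=
  hA.1.eigenvectorUnitary.1 * diagonal ((↑) ∘ (√·) ∘ hA.1.eigenvalues) *
    (star hA.1.eigenvectorUnitary : Mat2)

theorem psdSqrt_posSemidef {A : Mat2} (hA : A.PosSemidef) : (psdSqrt hA).PosSemidef := by
  have hd : (diagonal ((↑) ∘ (√·) ∘ hA.1.eigenvalues : Fin 2 → ℂ)).PosSemidef := by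
    refine PosSemidef.diagonal fun i => ?_
    simp [Complex.zero_le_real, Real.sqrt_nonneg]
  have := hd.mul_mul_conjTranspose_same (hA.1.eigenvectorUnitary.1)
  unfold psdSqrt
  convert this using 2
  rfl

def wMat (υ : ℤ → Mat2) (n : ℤ) : Mat2 :=
  psdSqrt (Matrix.posSemidef_conjTranspose_mul_self (υ n))

def sqrtwMat (υ : ℤ → Mat2) (n : ℤ) : Mat2 :=
  psdSqrt (psdSqrt_posSemidef (Matrix.posSemidef_conjTranspose_mul_self (υ n)))

/-- The Birman–Schwinger operator `K(z) = √W (D₀ − z)⁻¹ U √W`. -/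
def Kop (D0 sW Uop : Hsp →L[ℂ] Hsp) (z : ℂ) : Hsp →L[ℂ] Hsp :=
  sW * Ring.inverse (D0 - z • (1 : Hsp →L[ℂ] Hsp)) * Uop * sW

/-- The element of `ℓ²(ℤ, ℂ²)` supported at site `j` equal to the `β`-th standard basis vector. -/
def deltaVec (j : ℤ) (β : Fin 2) : Hsp := lp.single 2 j (EuclideanSpace.single β (1 : ℂ))


open Complex Filter

theorem psdSqrt_mul_self {A : Mat2} (hA : A.PosSemidef) : psdSqrt hA * psdSqrt hA = A := by
  have hU : (star hA.1.eigenvectorUnitary : Mat2) * hA.1.eigenvectorUnitary.1 = 1 := by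
    simp
  conv_rhs => rw [hA.1.spectral_theorem, Unitary.conjStarAlgAut_apply]
  unfold psdSqrt
  rw [show ∀ a b c d e f : Mat2, a * b * c * (d * e * f) = a * (b * (c * d) * e) * f from
    fun a b c d e f => by simp only [mul_assoc], hU, mul_one, diagonal_mul_diagonal]
  congr 3
  funext i
  simp only [Function.comp]
  rw [← Complex.ofReal_mul, Real.mul_self_sqrt (hA.eigenvalues_nonneg i)]
  rfl

lemma mAct_mul (A B : Mat2) (v : Vec2) : mAct A (mAct B v) = mAct (A * B) v := by
  simp [mAct, _root_.map_mul]

lemma mAct_adj (A : Mat2) (v w : Vec2) :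
    inner (𝕜 := ℂ) (mAct A v) w = inner (𝕜 := ℂ) v (mAct Aᴴ w) := by
  have h : mAct Aᴴ = ContinuousLinearMap.adjoint (mAct A) := by
    rw [← ContinuousLinearMap.star_eq_adjoint]
    simpa [mAct, Matrix.star_eq_conjTranspose] using map_star (Matrix.toEuclideanCLM (𝕜 := ℂ)) A
  rw [h, ContinuousLinearMap.adjoint_inner_right]


lemma quadpos (a b X Y : ℝ) (ha : 0 < a) (hb : 0 < b) (hab : a*b < 4)
    (hX : 0 ≤ X) (hY : 0 ≤ Y) (h : b*X^2 + a*Y^2 ≤ a*b*(X*Y)) : X = 0 ∧ Y = 0 := by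
  have h4b : b*(b*X^2 + a*Y^2) ≤ b*(a*b*(X*Y)) := mul_le_mul_of_nonneg_left h hb.le
  have key : a*b*(4 - a*b)*Y^2 ≤ 0 := by nlinarith [sq_nonneg (2*b*X - a*b*Y)]
  have h1 : 0 < a*b*(4 - a*b) := by nlinarith [mul_pos ha hb]
  have hY2 : Y^2 ≤ 0 := by
    by_contra hc
    push_neg at hc
    have := mul_pos h1 hc
    linarith
  have hY0 : Y = 0 := by
    have : Y^2 = 0 := le_antisymm hY2 (sq_nonneg Y)
    exact pow_eq_zero_iff two_ne_zero |>.mp this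
  subst hY0
  have hX2 : X^2 ≤ 0 := by nlinarith
  have : X^2 = 0 := le_antisymm hX2 (sq_nonneg X)
  exact ⟨pow_eq_zero_iff two_ne_zero |>.mp this, rfl⟩

lemma seq_zero (a b : ℝ) (hab1 : 0 < a*b) (hab2 : a*b < 4)
    (x y : ℤ → ℂ)
    (ex : ∀ n : ℤ, x (n+1) = x n - (a:ℂ) * y n)
    (ey : ∀ n : ℤ, y (n+1) = (b:ℂ) * x n + (1 - (a:ℂ)*(b:ℂ)) * y n)
    (hx0 : Tendsto (fun k : ℕ => x k) atTop (nhds 0))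
    (hy0 : Tendsto (fun k : ℕ => y k) atTop (nhds 0)) :
    ∀ n : ℤ, x n = 0 ∧ y n = 0 := by
  classical
  set c : ℤ → ℂ := fun n =>
    (b:ℂ) * ((starRingEnd ℂ) (x n) * x n) + (a:ℂ) * ((starRingEnd ℂ) (y n) * y n)
      - ((a:ℂ)*(b:ℂ))/2 * ((starRingEnd ℂ) (x n) * y n + (starRingEnd ℂ) (y n) * x n)
    with hc
  have ecx : ∀ n : ℤ, (starRingEnd ℂ) (x (n+1)) =
      (starRingEnd ℂ) (x n) - (a:ℂ) * (starRingEnd ℂ) (y n) := by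
    intro n; rw [ex n]; simp [map_sub, _root_.map_mul, Complex.conj_ofReal]
  have ecy : ∀ n : ℤ, (starRingEnd ℂ) (y (n+1)) =
      (b:ℂ) * (starRingEnd ℂ) (x n) + (1 - (a:ℂ)*(b:ℂ)) * (starRingEnd ℂ) (y n) := by
    intro n; rw [ey n]; simp [map_add, _root_.map_mul, map_sub, Complex.conj_ofReal]
  have step : ∀ n : ℤ, c (n+1) = c n := by
    intro n
    simp only [hc]
    rw [ecx n, ecy n, ex n, ey n]
    ring
  have cconst : ∀ n : ℤ, c n = c 0 := by
    intro n
    induction n using Int.induction_on with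
    | zero => rfl
    | succ k hk => exact (step k).trans hk
    | pred k hk =>
        have h1 := step (-(k:ℤ)-1)
        have h2 : (-(k:ℤ)-1) + 1 = -(k:ℤ) := by ring
        rw [h2] at h1
        exact h1.symm.trans hk
  have hcxlim : Tendsto (fun k : ℕ => (starRingEnd ℂ) (x k)) atTop (nhds 0) := by
    have := (Complex.continuous_conj.tendsto 0).comp hx0
    simpa [Function.comp_def] using this
  have hcylim : Tendsto (fun k : ℕ => (starRingEnd ℂ) (y k)) atTop (nhds 0) := by
    have := (Complex.continuous_conj.tendsto 0).comp hy0
    simpa [Function.comp_def] using this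
  have climit : Tendsto (fun k : ℕ => c k) atTop (nhds 0) := by
    have : Tendsto (fun k : ℕ => c k) atTop (nhds
        ((b:ℂ) * (0 * 0) + (a:ℂ) * (0 * 0) - ((a:ℂ)*(b:ℂ))/2 * (0 * 0 + 0 * 0))) := by
      simp only [hc]
      exact (((tendsto_const_nhds.mul (hcxlim.mul hx0)).add
        (tendsto_const_nhds.mul (hcylim.mul hy0))).sub
        (tendsto_const_nhds.mul ((hcxlim.mul hy0).add (hcylim.mul hx0))))
    simpa using this
  have c0 : c 0 = 0 := by
    have h2 : Tendsto (fun k : ℕ => c k) atTop (nhds (c 0)) := by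
      have : (fun k : ℕ => c k) = fun _ => c 0 := funext fun k => cconst k
      rw [this]; exact tendsto_const_nhds
    exact tendsto_nhds_unique h2 climit
  intro n
  have ceq : c n = 0 := (cconst n).trans c0
  set X := ‖x n‖ with hX
  set Y := ‖y n‖ with hY
  have hw : (starRingEnd ℂ) ((starRingEnd ℂ) (x n) * y n) = (starRingEnd ℂ) (y n) * x n := by
    rw [_root_.map_mul, Complex.conj_conj]; ring
  have f3 : ((((starRingEnd ℂ) (x n) * y n).re : ℝ) : ℂ)
      = ((starRingEnd ℂ) (x n) * y n + (starRingEnd ℂ) (y n) * x n)/2 := by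
    have hac := Complex.add_conj ((starRingEnd ℂ) (x n) * y n)
    push_cast at hac ⊢
    linear_combination (hw - hac)/2
  have hC : (b:ℂ) * ((Complex.normSq (x n) : ℝ) : ℂ) + (a:ℂ) * ((Complex.normSq (y n) : ℝ) : ℂ)
      = (a:ℂ)*(b:ℂ)*((((starRingEnd ℂ) (x n) * y n).re : ℝ) : ℂ) := by
    rw [Complex.normSq_eq_conj_mul_self, Complex.normSq_eq_conj_mul_self, f3]
    linear_combination ceq
  have heq : b * Complex.normSq (x n) + a * Complex.normSq (y n)
      = a*b*((starRingEnd ℂ) (x n) * y n).re := by exact_mod_cast hC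
  have habs : |((starRingEnd ℂ) (x n) * y n).re| ≤ X * Y := by
    calc |((starRingEnd ℂ) (x n) * y n).re| ≤ ‖(starRingEnd ℂ) (x n) * y n‖ :=
          Complex.abs_re_le_norm _
    _ = X * Y := by rw [norm_mul, Complex.norm_conj]
  have hXY : X = 0 ∧ Y = 0 := by
    rcases mul_pos_iff.mp hab1 with ⟨ha, hb⟩ | ⟨ha, hb⟩
    · refine quadpos a b X Y ha hb hab2 (norm_nonneg _) (norm_nonneg _) ?_
      have : b * X^2 + a * Y^2 = a*b*((starRingEnd ℂ) (x n) * y n).re := by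
        rw [hX, hY, Complex.sq_norm, Complex.sq_norm]; exact heq
      rw [this]
      have := abs_le.mp habs
      nlinarith [this.2]
    · refine quadpos (-a) (-b) X Y (by linarith) (by linarith) (by nlinarith)
        (norm_nonneg _) (norm_nonneg _) ?_
      have : (-b) * X^2 + (-a) * Y^2 = -(a*b*((starRingEnd ℂ) (x n) * y n).re) := by
        rw [hX, hY, Complex.sq_norm, Complex.sq_norm]; linarith [heq]
      rw [this]
      have := abs_le.mp habs
      nlinarith [this.1]
  constructor
  · exact norm_eq_zero.mp hXY.1
  · exact norm_eq_zero.mp hXY.2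

lemma aT_eq : aMat.transpose = !![0, -1; 0, 0] := by
  ext i j; fin_cases i <;> fin_cases j <;> simp [aMat, Matrix.transpose_apply]

lemma aT_conj : (aMat.transpose)ᴴ = aMat := by
  rw [aT_eq]; ext i j; fin_cases i <;> fin_cases j <;> simp [aMat]

lemma a_conj : aMatᴴ = aMat.transpose := by
  rw [aT_eq]; ext i j; fin_cases i <;> fin_cases j <;> simp [aMat]

lemma b_conj (m : ℝ) : (bMat m)ᴴ = bMat m := by
  ext i j; fin_cases i <;> fin_cases j <;> simp [bMat]

lemma sq_summable (x : Hsp) : Summable (fun n : ℤ => ‖x n‖^2) := by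
  have h := (lp.memℓp x).summable (p := 2) (by norm_num)
  refine h.congr fun n => ?_
  rw [ENNReal.toReal_ofNat]
  exact Real.rpow_two _

lemma prodsum (x y : Hsp) (j : ℤ) : Summable (fun n : ℤ => ‖x (n+j)‖ * ‖y n‖) := by
  have hx : Summable (fun n : ℤ => ‖x (n+j)‖^2) := by
    have := (Equiv.summable_iff (Equiv.addRight j)
      (f := fun n : ℤ => ‖x n‖^2)).mpr (sq_summable x)
    exact this.congr fun n => rfl
  have hy := sq_summable y
  apply Summable.of_nonneg_of_le (fun n => mul_nonneg (norm_nonneg _) (norm_nonneg _))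
    (fun n => ?_) (((hx.add hy).div_const 2))
  nlinarith [sq_nonneg (‖x (n+j)‖ - ‖y n‖)]

lemma innersum (A : Mat2) (x y : Hsp) (j : ℤ) :
    Summable (fun n : ℤ => (inner (𝕜 := ℂ) (x (n+j)) (mAct A (y n)) : ℂ)) := by
  apply Summable.of_norm_bounded (g := fun n => ‖mAct A‖ * (‖x (n+j)‖ * ‖y n‖))
    ((prodsum x y j).mul_left _)
  intro n
  calc ‖(inner (𝕜 := ℂ) (x (n+j)) (mAct A (y n)) : ℂ)‖ ≤ ‖x (n+j)‖ * ‖mAct A (y n)‖ :=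
        norm_inner_le_norm _ _
  _ ≤ ‖x (n+j)‖ * (‖mAct A‖ * ‖y n‖) := by
      gcongr; exact (mAct A).le_opNorm _
  _ = ‖mAct A‖ * (‖x (n+j)‖ * ‖y n‖) := by ring

lemma hsym (m : ℝ) (D0 : Hsp →L[ℂ] Hsp) (hD0 : IsFreeDirac m D0) (x y : Hsp) :
    (inner (𝕜 := ℂ) (D0 x) y : ℂ) = inner (𝕜 := ℂ) x (D0 y) := by
  have hf1 : Summable (fun n : ℤ => (inner (𝕜 := ℂ) (x (n-1)) (mAct aMat (y n)) : ℂ)) := by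
    have := innersum aMat x y (-1)
    exact this.congr fun n => by rw [sub_eq_add_neg]
  have hf2 : Summable (fun n : ℤ => (inner (𝕜 := ℂ) (x n) (mAct (bMat m) (y n)) : ℂ)) := by
    have := innersum (bMat m) x y 0
    exact this.congr fun n => by rw [add_zero]
  have hf3 : Summable (fun n : ℤ =>
      (inner (𝕜 := ℂ) (x (n+1)) (mAct aMat.transpose (y n)) : ℂ)) :=
    innersum aMat.transpose x y 1
  have lhs : (inner (𝕜 := ℂ) (D0 x) y : ℂ)
      = (∑' n : ℤ, (inner (𝕜 := ℂ) (x (n-1)) (mAct aMat (y n)) : ℂ))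
        + ((∑' n : ℤ, (inner (𝕜 := ℂ) (x n) (mAct (bMat m) (y n)) : ℂ))
        + (∑' n : ℤ, (inner (𝕜 := ℂ) (x (n+1)) (mAct aMat.transpose (y n)) : ℂ))) := by
    rw [lp.inner_eq_tsum]
    rw [← Summable.tsum_add hf2 hf3, ← Summable.tsum_add hf1 (hf2.add hf3)]
    congr 1
    funext n
    rw [hD0 x n]
    have e : ((mAct aMat.transpose (x (n - 1)) + mAct (bMat m) (x n) + mAct aMat (x (n + 1)) : Vec2))
        = (mAct aMat.transpose (x (n - 1)) + mAct (bMat m) (x n) + mAct aMat (x (n + 1)) : Vec2) := rfl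
    rw [inner_add_left, inner_add_left]
    rw [mAct_adj, aT_conj, mAct_adj, b_conj, mAct_adj, a_conj, add_assoc]
  have rhs : (inner (𝕜 := ℂ) x (D0 y) : ℂ)
      = (∑' n : ℤ, (inner (𝕜 := ℂ) (x n) (mAct aMat.transpose (y (n-1))) : ℂ))
        + ((∑' n : ℤ, (inner (𝕜 := ℂ) (x n) (mAct (bMat m) (y n)) : ℂ))
        + (∑' n : ℤ, (inner (𝕜 := ℂ) (x n) (mAct aMat (y (n+1))) : ℂ))) := by
    have hg1 : Summable (fun n : ℤ =>
        (inner (𝕜 := ℂ) (x n) (mAct aMat.transpose (y (n-1))) : ℂ)) := by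
      have h := (Equiv.summable_iff (Equiv.subRight (1:ℤ))).mpr hf3
      refine h.congr fun n => ?_
      simp [Equiv.subRight]
    have hg3 : Summable (fun n : ℤ =>
        (inner (𝕜 := ℂ) (x n) (mAct aMat (y (n+1))) : ℂ)) := by
      have h := (Equiv.summable_iff (Equiv.addRight (1:ℤ))).mpr hf1
      refine h.congr fun n => ?_
      simp [Equiv.addRight]
    rw [lp.inner_eq_tsum]
    rw [← Summable.tsum_add hf2 hg3, ← Summable.tsum_add hg1 (hf2.add hg3)]
    congr 1
    funext n
    rw [hD0 y n]
    rw [inner_add_right, inner_add_right, add_assoc]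
  have sh1 : (∑' n : ℤ, (inner (𝕜 := ℂ) (x n) (mAct aMat.transpose (y (n-1))) : ℂ))
      = ∑' n : ℤ, (inner (𝕜 := ℂ) (x (n+1)) (mAct aMat.transpose (y n)) : ℂ) := by
    rw [← Equiv.tsum_eq (Equiv.subRight (1:ℤ))
      (fun n => (inner (𝕜 := ℂ) (x (n+1)) (mAct aMat.transpose (y n)) : ℂ))]
    apply tsum_congr
    intro n
    simp [Equiv.subRight]
  have sh2 : (∑' n : ℤ, (inner (𝕜 := ℂ) (x n) (mAct aMat (y (n+1))) : ℂ))
      = ∑' n : ℤ, (inner (𝕜 := ℂ) (x (n-1)) (mAct aMat (y n)) : ℂ) := by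
    rw [← Equiv.tsum_eq (Equiv.addRight (1:ℤ))
      (fun n => (inner (𝕜 := ℂ) (x (n-1)) (mAct aMat (y n)) : ℂ))]
    apply tsum_congr
    intro n
    simp [Equiv.addRight]
  rw [lhs, rhs, sh1, sh2]
  ring

lemma mAct_apply2 (A : Mat2) (v : Vec2) (i : Fin 2) :
    mAct A v i = A i 0 * v 0 + A i 1 * v 1 := by
  have h := Matrix.ofLp_toEuclideanCLM (𝕜 := ℂ) A v
  have h2 := congrFun h i
  simpa [Matrix.mulVec, dotProduct, Fin.sum_univ_two, mAct] using h2

lemma coord_le (v : Vec2) (i : Fin 2) : ‖v i‖ ≤ ‖v‖ := by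
  rw [EuclideanSpace.norm_eq]
  rw [show ‖v i‖ = Real.sqrt (‖v i‖^2) from (Real.sqrt_sq (norm_nonneg _)).symm]
  apply Real.sqrt_le_sqrt
  apply Finset.single_le_sum (f := fun j => ‖v j‖^2) (fun j _ => sq_nonneg _) (Finset.mem_univ i)

lemma norm_tendsto (χ : Hsp) : Tendsto (fun k : ℕ => ‖χ (k:ℤ)‖) atTop (nhds 0) := by
  have h1 : Tendsto (fun n : ℤ => ‖χ n‖^2) cofinite (nhds 0) :=
    (sq_summable χ).tendsto_cofinite_zero
  have h2 : Tendsto (fun k : ℕ => (k:ℤ)) cofinite cofinite :=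
    Function.Injective.tendsto_cofinite (Nat.cast_injective : Function.Injective (Nat.cast : ℕ → ℤ))
  rw [Nat.cofinite_eq_atTop] at h2
  have h3 : Tendsto (fun k : ℕ => ‖χ (k:ℤ)‖^2) atTop (nhds 0) := h1.comp h2
  have h4 := (Real.continuous_sqrt.tendsto 0).comp h3
  simp only [Function.comp] at h4
  have h5 : ∀ k : ℕ, Real.sqrt (‖χ (k:ℤ)‖^2) = ‖χ (k:ℤ)‖ := fun k =>
    Real.sqrt_sq (norm_nonneg _)
  rw [Real.sqrt_zero] at h4
  exact h4.congr h5

lemma no_eig (m lam : ℝ) (D0 : Hsp →L[ℂ] Hsp) (hD0 : IsFreeDirac m D0)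
    (hP1 : 0 < lam^2 - m^2) (hP2 : lam^2 - m^2 < 4)
    (χ : Hsp) (h : D0 χ = (lam:ℂ) • χ) : χ = 0 := by
  set x : ℤ → ℂ := fun n => χ n 0 with hxdef
  set y : ℤ → ℂ := fun n => χ n 1 with hydef
  have hrow : ∀ (n : ℤ) (i : Fin 2),
      mAct aMat.transpose (χ (n-1)) i + mAct (bMat m) (χ n) i + mAct aMat (χ (n+1)) i
        = (lam:ℂ) * χ n i := by
    intro n i
    have h1 : (D0 χ) n = ((lam:ℂ) • χ) n := by rw [h]
    rw [hD0 χ n, lp.coeFn_smul] at h1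
    have h2 := congrArg (fun w : Vec2 => w i) h1
    simpa using h2
  have e1 : ∀ n : ℤ, y n - y (n-1) = ((lam:ℂ)+m) * x n := by
    intro n
    have h2 := hrow n 0
    rw [mAct_apply2, mAct_apply2, mAct_apply2, aT_eq] at h2
    simp [aMat, bMat] at h2
    linear_combination h2
  have e2 : ∀ n : ℤ, x n - x (n+1) = ((lam:ℂ)-m) * y n := by
    intro n
    have h2 := hrow n 1
    rw [mAct_apply2, mAct_apply2, mAct_apply2, aT_eq] at h2
    simp [aMat, bMat] at h2
    linear_combination h2
  have ex : ∀ n : ℤ, x (n+1) = x n - ((lam - m : ℝ):ℂ) * y n := by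
    intro n; have := e2 n; push_cast; linear_combination -this
  have ey : ∀ n : ℤ, y (n+1) = ((lam + m : ℝ):ℂ) * x n
      + (1 - ((lam - m : ℝ):ℂ)*((lam + m : ℝ):ℂ)) * y n := by
    intro n
    have h1 := e1 (n+1)
    rw [add_sub_cancel_right] at h1
    have h2 := ex n
    push_cast at h1 h2 ⊢
    linear_combination h1 + ((lam:ℂ)+m) * h2
  have hx0 : Tendsto (fun k : ℕ => x k) atTop (nhds 0) := by
    exact squeeze_zero_norm (f := fun k : ℕ => x (k:ℤ)) (fun k : ℕ => coord_le (χ (k:ℤ)) 0) (norm_tendsto χ)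
  have hy0 : Tendsto (fun k : ℕ => y k) atTop (nhds 0) := by
    exact squeeze_zero_norm (f := fun k : ℕ => y (k:ℤ)) (fun k : ℕ => coord_le (χ (k:ℤ)) 1) (norm_tendsto χ)
  have hab1 : 0 < (lam - m)*(lam + m) := by nlinarith
  have hab2 : (lam - m)*(lam + m) < 4 := by nlinarith
  have hz := seq_zero (lam - m) (lam + m) hab1 hab2 x y ex ey hx0 hy0
  ext n i
  fin_cases i
  · simpa using (hz n).1
  · simpa using (hz n).2

set_option maxHeartbeats 1000000 in
/-- Birman–Schwinger principle for embedded eigenvalues: if `λ ∈ σ(D₀)` is not one of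
the endpoints `±m, ±√(m²+4)` and `D_V ψ = λψ`, then `φ = √W ψ ∈ H` and
`lim_{ε→0⁺} ⟨φ', K(λ+iε)φ⟩ = −⟨φ', φ⟩` for all `φ' ∈ H`. -/
theorem stmt11 (m : ℝ) (hm : 0 ≤ m) (υ u : ℤ → Mat2)
    (hsum : Summable fun n => specNorm (υ n))
    (hpolar : ∀ n, υ n = u n * wMat υ n) (hu : ∀ n, specNorm (u n) ≤ 1)
    (D0 Vop sW Uop : Hsp →L[ℂ] Hsp)
    (hD0 : IsFreeDirac m D0) (hVop : IsBlockDiagOp υ Vop)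
    (hsW : IsBlockDiagOp (sqrtwMat υ) sW) (hU : IsBlockDiagOp u Uop)
    (hspec : spectrum ℂ D0 = sigma0 m)
    (lam : ℝ) (hlam : (lam : ℂ) ∈ sigma0 m)
    (hlam1 : lam ≠ m) (hlam2 : lam ≠ -m)
    (hlam3 : lam ≠ Real.sqrt (m ^ 2 + 4)) (hlam4 : lam ≠ -Real.sqrt (m ^ 2 + 4))
    (ψ : Hsp) (heig : (D0 + Vop) ψ = ((lam : ℂ)) • ψ)
    (φ' : Hsp) :
    Filter.Tendsto
      (fun ε : ℝ =>
        inner (𝕜 := ℂ) φ' (Kop D0 sW Uop ((lam : ℂ) + ε * Complex.I) (sW ψ)))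
      (nhdsWithin 0 (Set.Ioi 0))
      (nhds (-(inner (𝕜 := ℂ) φ' (sW ψ) : ℂ))) := by
  -- strict spectral position
  have hs4 : (0:ℝ) ≤ m^2 + 4 := by positivity
  have hs : (Real.sqrt (m^2+4))^2 = m^2+4 := Real.sq_sqrt hs4
  have hsnn : 0 ≤ Real.sqrt (m^2+4) := Real.sqrt_nonneg _
  have hP12 : 0 < lam^2 - m^2 ∧ lam^2 - m^2 < 4 := by
    obtain ⟨r, hr, hre⟩ := hlam
    have hrl : r = lam := by exact_mod_cast hre
    subst hrl
    rcases hr with h | h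
    · obtain ⟨h1, h2⟩ := h
      have h2' : r < -m := lt_of_le_of_ne h2 hlam2
      have h1' : -Real.sqrt (m^2+4) < r := lt_of_le_of_ne h1 (fun hh => hlam4 hh.symm)
      constructor <;> nlinarith
    · obtain ⟨h1, h2⟩ := h
      have h1' : m < r := lt_of_le_of_ne h1 (fun hh => hlam1 hh.symm)
      have h2' : r < Real.sqrt (m^2+4) := lt_of_le_of_ne h2 hlam3
      constructor <;> nlinarith
  -- symmetry of D0 and of B := D0 - lam
  set B : Hsp →L[ℂ] Hsp := D0 - (lam:ℂ) • 1 with hBdef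
  have hBapp : ∀ v : Hsp, B v = D0 v - (lam:ℂ) • v := by
    intro v
    rw [hBdef, ContinuousLinearMap.sub_apply, ContinuousLinearMap.smul_apply,
      ContinuousLinearMap.one_apply]
  have hsymB : ∀ x y : Hsp, (inner (𝕜 := ℂ) (B x) y : ℂ) = inner (𝕜 := ℂ) x (B y) := by
    intro x y
    rw [hBapp, hBapp, inner_sub_left, inner_sub_right, hsym m D0 hD0,
      inner_smul_left, inner_smul_right, Complex.conj_ofReal]
  -- units
  have hunit : ∀ ε : ℝ, 0 < ε →
      IsUnit (D0 - ((lam:ℂ) + ε * Complex.I) • (1 : Hsp →L[ℂ] Hsp)) := by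
    intro ε hε
    set z : ℂ := (lam:ℂ) + ε * Complex.I with hz
    have hzim : z.im = ε := by simp [hz]
    have hznot : z ∉ spectrum ℂ D0 := by
      rw [hspec]
      rintro ⟨r, _, hre⟩
      have : z.im = 0 := by rw [← hre]; simp
      rw [hzim] at this; exact hε.ne' this
    have h1 := spectrum.notMem_iff.mp hznot
    have h2 : (algebraMap ℂ (Hsp →L[ℂ] Hsp)) z - D0 = -(D0 - z • 1) := by
      rw [Algebra.algebraMap_eq_smul_one, neg_sub]
    rw [h2] at h1
    exact (IsUnit.neg_iff _).mp h1
  -- resolvent lower/upper bounds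
  have hlow : ∀ ε : ℝ, 0 < ε → ∀ v : Hsp,
      ε * ‖v‖ ≤ ‖(D0 - ((lam:ℂ) + ε * Complex.I) • (1 : Hsp →L[ℂ] Hsp)) v‖ := by
    intro ε hε v
    have hsplit : (D0 - ((lam:ℂ) + ε * Complex.I) • (1 : Hsp →L[ℂ] Hsp)) v
        = B v - ((ε:ℂ) * Complex.I) • v := by
      rw [ContinuousLinearMap.sub_apply, ContinuousLinearMap.smul_apply,
        ContinuousLinearMap.one_apply, hBapp]
      module
    rw [hsplit]
    have hreal : (inner (𝕜 := ℂ) (B v) v : ℂ).im = 0 := by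
      have h1 : (inner (𝕜 := ℂ) (B v) v : ℂ) = inner (𝕜 := ℂ) v (B v) := hsymB v v
      have h2 : (starRingEnd ℂ) (inner (𝕜 := ℂ) (B v) v : ℂ) = inner (𝕜 := ℂ) v (B v) :=
        inner_conj_symm _ _
      have h3 : (starRingEnd ℂ) (inner (𝕜 := ℂ) (B v) v : ℂ) = inner (𝕜 := ℂ) (B v) v := by
        rw [h2, ← h1]
      exact Complex.conj_eq_iff_im.mp h3
    have hn := norm_sub_sq (𝕜 := ℂ) (E := Hsp) (B v) (((ε:ℂ) * Complex.I) • v)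
    have hcross : RCLike.re (inner (𝕜 := ℂ) (B v) (((ε:ℂ) * Complex.I) • v)) = (0:ℝ) := by
      rw [inner_smul_right, RCLike.re_to_complex, Complex.mul_re]
      have h5 : ((ε:ℂ) * Complex.I).re = 0 := by simp
      have h6 : ((ε:ℂ) * Complex.I).im = ε := by simp
      rw [h5, h6, hreal]
      ring
    have hsm : ‖((ε:ℂ) * Complex.I) • v‖ = ε * ‖v‖ := by
      rw [norm_smul]
      simp [abs_of_pos hε]
    have hsq : (ε*‖v‖)^2 ≤ ‖B v - ((ε:ℂ) * Complex.I) • v‖^2 := by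
      rw [hn, hcross, hsm]
      nlinarith [sq_nonneg (‖B v‖)]
    have h2 : 0 ≤ ε * ‖v‖ := by positivity
    exact (pow_le_pow_iff_left₀ h2 (norm_nonneg _) two_ne_zero).mp hsq
  have hres : ∀ ε : ℝ, 0 < ε → ∀ v : Hsp,
      ‖Ring.inverse (D0 - ((lam:ℂ) + ε * Complex.I) • (1 : Hsp →L[ℂ] Hsp)) v‖ ≤ ‖v‖ / ε := by
    intro ε hε v
    set M := D0 - ((lam:ℂ) + ε * Complex.I) • (1 : Hsp →L[ℂ] Hsp) with hM
    have h1 : M (Ring.inverse M v) = v := by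
      have := Ring.mul_inverse_cancel M (hunit ε hε)
      calc M (Ring.inverse M v) = (M * Ring.inverse M) v := rfl
      _ = v := by rw [this]; rfl
    have h2 := hlow ε hε (Ring.inverse M v)
    rw [h1] at h2
    rw [le_div_iff₀ hε, mul_comm]
    exact h2
  -- density of range of B
  have hdense : ∀ δ : ℝ, 0 < δ → ∃ χ : Hsp, ‖ψ - B χ‖ < δ := by
    intro δ hδ
    set K : Submodule ℂ Hsp := LinearMap.range (B : Hsp →ₗ[ℂ] Hsp) with hK
    have horth : Kᗮ = ⊥ := by
      rw [Submodule.eq_bot_iff]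
      intro v hv
      have h1 : ∀ x : Hsp, (inner (𝕜 := ℂ) (B x) v : ℂ) = 0 := by
        intro x
        exact (Submodule.mem_orthogonal K v).mp hv (B x) ⟨x, rfl⟩
      have h2 : B v = 0 := by
        have h3 := h1 (B v)
        rw [hsymB] at h3
        exact inner_self_eq_zero.mp h3
      have h4 : D0 v = (lam:ℂ) • v := by
        have h5 := hBapp v
        rw [h2] at h5
        exact sub_eq_zero.mp h5.symm
      exact no_eig m lam D0 hD0 hP12.1 hP12.2 v h4
    have htop : K.topologicalClosure = ⊤ := Submodule.topologicalClosure_eq_top_iff.mpr horth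
    have hmem : ψ ∈ closure (K : Set Hsp) := by
      have : ψ ∈ K.topologicalClosure := by rw [htop]; trivial
      exact this
    rw [Metric.mem_closure_iff] at hmem
    obtain ⟨w, hw, hdist⟩ := hmem δ hδ
    obtain ⟨χ, hχ⟩ := hw
    refine ⟨χ, ?_⟩
    have hBχ : B χ = w := hχ
    rw [dist_eq_norm] at hdist
    rw [hBχ]
    exact hdist
  -- the error vector
  set g : ℝ → Hsp := fun ε => ((ε:ℂ) * Complex.I) •
      (Ring.inverse (D0 - ((lam:ℂ) + ε * Complex.I) • (1 : Hsp →L[ℂ] Hsp)) ψ) with hg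
  have hnormC : ∀ ε : ℝ, 0 < ε → ‖(ε:ℂ) * Complex.I‖ = ε := by
    intro ε hε
    simp [abs_of_pos hε]
  have hgbound : ∀ ε : ℝ, 0 < ε → ∀ χ : Hsp, ‖g ε‖ ≤ ‖ψ - B χ‖ + 2 * ε * ‖χ‖ := by
    intro ε hε χ
    set M := D0 - ((lam:ℂ) + ε * Complex.I) • (1 : Hsp →L[ℂ] Hsp) with hM
    set R := Ring.inverse M with hR
    have hRψ : R ψ = R (ψ - B χ) + R (B χ) := by
      rw [← map_add]
      congr 1
      abel
    have hMR : ∀ w : Hsp, R (M w) = w := by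
      intro w
      have h0 := Ring.inverse_mul_cancel M (hunit ε hε)
      calc R (M w) = (R * M) w := rfl
      _ = w := by rw [h0]; rfl
    have hRB : R (B χ) = χ + ((ε:ℂ) * Complex.I) • R χ := by
      have hBM : B χ = M (χ) + ((ε:ℂ) * Complex.I) • χ := by
        rw [hBapp χ, hM, ContinuousLinearMap.sub_apply, ContinuousLinearMap.smul_apply,
          ContinuousLinearMap.one_apply]
        module
      rw [hBM, map_add, _root_.map_smul, hMR]
    have h1 : ‖g ε‖ = ε * ‖R ψ‖ := by
      rw [hg]
      simp only
      rw [norm_smul, hnormC ε hε]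
    have h2 : ‖R (ψ - B χ)‖ ≤ ‖ψ - B χ‖ / ε := hres ε hε _
    have h3 : ‖R (B χ)‖ ≤ 2 * ‖χ‖ := by
      rw [hRB]
      calc ‖χ + ((ε:ℂ) * Complex.I) • R χ‖ ≤ ‖χ‖ + ‖((ε:ℂ) * Complex.I) • R χ‖ :=
            norm_add_le _ _
      _ = ‖χ‖ + ε * ‖R χ‖ := by rw [norm_smul, hnormC ε hε]
      _ ≤ ‖χ‖ + ε * (‖χ‖ / ε) := by
          have := hres ε hε χ
          gcongr
      _ = 2 * ‖χ‖ := by field_simp; ring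
    have h4 : ‖R ψ‖ ≤ ‖ψ - B χ‖ / ε + 2 * ‖χ‖ := by
      rw [hRψ]
      calc ‖R (ψ - B χ) + R (B χ)‖ ≤ ‖R (ψ - B χ)‖ + ‖R (B χ)‖ := norm_add_le _ _
      _ ≤ ‖ψ - B χ‖ / ε + 2 * ‖χ‖ := by gcongr
    rw [h1]
    calc ε * ‖R ψ‖ ≤ ε * (‖ψ - B χ‖ / ε + 2 * ‖χ‖) := by gcongr
    _ = ‖ψ - B χ‖ + 2 * ε * ‖χ‖ := by field_simp
  have hgtend : Tendsto g (nhdsWithin 0 (Set.Ioi 0)) (nhds 0) := by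
    rw [Metric.tendsto_nhdsWithin_nhds]
    intro δ hδ
    obtain ⟨χ, hχ⟩ := hdense (δ/2) (by linarith)
    refine ⟨δ/(4*‖χ‖+2), by positivity, ?_⟩
    intro ε hεIoi hdist
    have hε : (0:ℝ) < ε := hεIoi
    rw [Real.dist_eq, sub_zero, abs_of_pos hε] at hdist
    rw [dist_eq_norm, sub_zero]
    have h2 := hgbound ε hε χ
    have h3 : 2*ε*‖χ‖ < δ/2 := by
      have hlt : ε * (4*‖χ‖+2) < δ := by
        rw [lt_div_iff₀ (by positivity)] at hdist
        exact hdist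
      nlinarith [norm_nonneg χ, hε]
    linarith
  -- main algebraic identity
  have hUsW : Uop (sW (sW ψ)) = Vop ψ := by
    apply lp.ext
    funext n
    rw [hU, hsW, hsW, hVop, mAct_mul, mAct_mul]
    congr 1
    have h1 : sqrtwMat υ n * sqrtwMat υ n = wMat υ n :=
      psdSqrt_mul_self _
    rw [mul_assoc, h1, ← hpolar n]
  have hVψ : Vop ψ = (lam:ℂ) • ψ - D0 ψ := by
    have h0 : D0 ψ + Vop ψ = (lam:ℂ) • ψ := by
      rw [← ContinuousLinearMap.add_apply]; exact heig
    rw [eq_sub_iff_add_eq, add_comm]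
    exact h0
  have hKid : ∀ ε : ℝ, 0 < ε →
      (inner (𝕜 := ℂ) φ' (Kop D0 sW Uop ((lam:ℂ) + ε * Complex.I) (sW ψ)) : ℂ)
        = -(inner (𝕜 := ℂ) φ' (sW ψ) : ℂ) - inner (𝕜 := ℂ) φ' (sW (g ε)) := by
    intro ε hε
    set M := D0 - ((lam:ℂ) + ε * Complex.I) • (1 : Hsp →L[ℂ] Hsp) with hM
    set R := Ring.inverse M with hR
    have hMR : ∀ w : Hsp, R (M w) = w := by
      intro w
      have h0 := Ring.inverse_mul_cancel M (hunit ε hε)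
      calc R (M w) = (R * M) w := rfl
      _ = w := by rw [h0]; rfl
    have hKapp : Kop D0 sW Uop ((lam:ℂ) + ε * Complex.I) (sW ψ)
        = sW (R (Uop (sW (sW ψ)))) := rfl
    have hexp : (lam:ℂ) • ψ - D0 ψ = -(M ψ) - ((ε:ℂ) * Complex.I) • ψ := by
      rw [hM, ContinuousLinearMap.sub_apply, ContinuousLinearMap.smul_apply,
        ContinuousLinearMap.one_apply]
      module
    have hRV : R (Vop ψ) = -ψ - ((ε:ℂ) * Complex.I) • R ψ := by
      rw [hVψ, hexp, map_sub, map_neg, _root_.map_smul, hMR]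
    have hgε : g ε = ((ε:ℂ) * Complex.I) • R ψ := rfl
    rw [hKapp, hUsW, hRV, map_sub, map_neg, _root_.map_smul, inner_sub_right,
      inner_neg_right]
  -- conclusion
  have hcont : Continuous fun v : Hsp => (inner (𝕜 := ℂ) φ' (sW v) : ℂ) :=
    (innerSL ℂ φ').continuous.comp sW.continuous
  have h0 : Tendsto (fun ε : ℝ => (inner (𝕜 := ℂ) φ' (sW (g ε)) : ℂ))
      (nhdsWithin 0 (Set.Ioi 0)) (nhds 0) := by
    have := (hcont.tendsto 0).comp hgtend
    simpa [Function.comp_def] using this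
  have hlim2 : Tendsto
      (fun ε : ℝ => -(inner (𝕜 := ℂ) φ' (sW ψ) : ℂ) - inner (𝕜 := ℂ) φ' (sW (g ε)))
      (nhdsWithin 0 (Set.Ioi 0)) (nhds (-(inner (𝕜 := ℂ) φ' (sW ψ) : ℂ))) := by
    have h1 : Tendsto
        (fun ε : ℝ => -(inner (𝕜 := ℂ) φ' (sW ψ) : ℂ) - inner (𝕜 := ℂ) φ' (sW (g ε)))
        (nhdsWithin 0 (Set.Ioi 0)) (nhds (-(inner (𝕜 := ℂ) φ' (sW ψ) : ℂ) - 0)) :=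
      tendsto_const_nhds.sub h0
    simpa using h1
  refine hlim2.congr' ?_
  filter_upwards [self_mem_nhdsWithin] with ε hε
  exact (hKid ε hε).symm
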